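/- For every locally ringed space X there exist a locally ringed space X° with the same underlying topological space as X and a morphism t : X° ⟶ X whose underlying continuous map is the identity and all of whose stalk maps are surjective, such that X° is tidy and the following universal property holds: for every morphism φ : Y ⟶ X of locally ringed spaces with Y tidy, there exists a unique morphism φ° : Y ⟶ X° with t ∘ φ° = φ. -/

import Mathlib

open AlgebraicGeometry CategoryTheory TopologicalSpace Opposite

/-- A locally ringed space is *tidy* if for every open `V`, every section `g` over `V` and
every point `x ∈ V`: if the germ of `g` at every point of `V` lies in every power of the
maximal ideal of the stalk, then the germ of `g` at `x` is `0`. -/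
def TidySpace (X : LocallyRingedSpace) : Prop :=
  ∀ (V : Opens X) (g : X.presheaf.obj (op V)) (x : X) (hx : x ∈ V),
    (∀ (x' : X) (hx' : x' ∈ V) (N : ℕ),
      X.presheaf.germ V x' hx' g ∈
        (IsLocalRing.maximalIdeal (X.presheaf.stalk x')) ^ N) →
    X.presheaf.germ V x hx g = 0

noncomputable section Tidying

open TopCat TopCat.Presheaf IsLocalRing

namespace Tidying

variable (X : LocallyRingedSpace.{u})

/-- The ideal of "infinitesimal" elements of the stalk. -/
def J (x : X) : Ideal (X.presheaf.stalk x) :=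
  ⨅ n : ℕ, (maximalIdeal (X.presheaf.stalk x)) ^ n

/-- The quotient stalk. -/
def Q (x : X) : Type u := X.presheaf.stalk x ⧸ J X x

instance (x : X) : CommRing (Q X x) := Ideal.Quotient.commRing _

/-- quotient map -/
def mkQ (x : X) : X.presheaf.stalk x →+* Q X x := Ideal.Quotient.mk _

/-- The canonical ring hom from sections to functions into quotient stalks. -/
def θring (U : Opens X) : X.presheaf.obj (op U) →+* ∀ x : U, Q X x.1 :=
  Pi.ringHom fun x => (mkQ X x.1).comp (X.presheaf.germ U x.1 x.2).hom

@[simp] lemma θring_apply (U : Opens X) (g : X.presheaf.obj (op U)) (x : U) :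
    θring X U g x = mkQ X x.1 (X.presheaf.germ U x.1 x.2 g) := rfl

/-- The prelocal predicate of being the pointwise germ of a single section. -/
def isGermPre : PrelocalPredicate (Q X) where
  pred {U} f := ∃ g : X.presheaf.obj (op U), f = θring X U g
  res {U V} i f := by
    rintro ⟨g, rfl⟩
    exact ⟨X.presheaf.map i.op g, by
      funext x
      show mkQ X x.1 _ = mkQ X x.1 _
      rw [X.presheaf.germ_res_apply i x.1 x.2 g]
      rfl⟩

/-- The local predicate of being locally a germ. -/
def isLocallyGerm : LocalPredicate (Q X) := (isGermPre X).sheafify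

/-- The sections satisfying `isLocallyGerm` form a subring of the product of quotient stalks. -/
def sectionsSubring (U : (Opens X)ᵒᵖ) : Subring (∀ x : U.unop, Q X x.1) where
  carrier := {f | (isLocallyGerm X).pred f}
  zero_mem' := (isGermPre X).sheafifyOf ⟨0, (map_zero (θring X U.unop)).symm⟩
  one_mem' := (isGermPre X).sheafifyOf ⟨1, (map_one (θring X U.unop)).symm⟩
  add_mem' := by
    intro a b ha hb x
    obtain ⟨Va, ma, ia, ga, hga⟩ := ha x
    obtain ⟨Vb, mb, ib, gb, hgb⟩ := hb x
    refine ⟨Va ⊓ Vb, ⟨ma, mb⟩, Opens.infLELeft _ _ ≫ ia,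
      X.presheaf.map (Opens.infLELeft Va Vb).op ga +
        X.presheaf.map (Opens.infLERight Va Vb).op gb, ?_⟩
    funext y
    have h1 := congrFun hga ⟨y.1, y.2.1⟩
    have h2 := congrFun hgb ⟨y.1, y.2.2⟩
    show a (ia ⟨y.1, y.2.1⟩) + b (ib ⟨y.1, y.2.2⟩) = _
    rw [h1, h2, map_add]
    show _ = θring X _ _ y + θring X _ _ y
    rw [θring_apply, θring_apply, θring_apply, θring_apply,
      X.presheaf.germ_res_apply (Opens.infLELeft Va Vb) y.1 y.2 ga,
      X.presheaf.germ_res_apply (Opens.infLERight Va Vb) y.1 y.2 gb]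
  neg_mem' := by
    intro a ha x
    obtain ⟨Va, ma, ia, ga, hga⟩ := ha x
    refine ⟨Va, ma, ia, -ga, ?_⟩
    funext y
    have h1 := congrFun hga y
    show -a (ia y) = _
    rw [h1, map_neg]
    rfl
  mul_mem' := by
    intro a b ha hb x
    obtain ⟨Va, ma, ia, ga, hga⟩ := ha x
    obtain ⟨Vb, mb, ib, gb, hgb⟩ := hb x
    refine ⟨Va ⊓ Vb, ⟨ma, mb⟩, Opens.infLELeft _ _ ≫ ia,
      X.presheaf.map (Opens.infLELeft Va Vb).op ga *
        X.presheaf.map (Opens.infLERight Va Vb).op gb, ?_⟩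
    funext y
    have h1 := congrFun hga ⟨y.1, y.2.1⟩
    have h2 := congrFun hgb ⟨y.1, y.2.2⟩
    show a (ia ⟨y.1, y.2.1⟩) * b (ib ⟨y.1, y.2.2⟩) = _
    rw [h1, h2, map_mul]
    show _ = θring X _ _ y * θring X _ _ y
    rw [θring_apply, θring_apply, θring_apply, θring_apply,
      X.presheaf.germ_res_apply (Opens.infLELeft Va Vb) y.1 y.2 ga,
      X.presheaf.germ_res_apply (Opens.infLERight Va Vb) y.1 y.2 gb]

/-- The tidy sheaf, valued in types. -/
def sheafInType : Sheaf (Type u) X.toTopCat := subsheafToTypes (isLocallyGerm X)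

instance commRingSheafInTypeObj (U : (Opens X)ᵒᵖ) :
    CommRing ((sheafInType X).1.obj U) :=
  (sectionsSubring X U).toCommRing

/-- The tidy presheaf, valued in `CommRingCat`. -/
def presheafCommRing : TopCat.Presheaf CommRingCat X.toTopCat where
  obj U := CommRingCat.of ((sheafInType X).1.obj U)
  map {_ _} i :=
    CommRingCat.ofHom
    { toFun := (sheafInType X).1.map i
      map_zero' := rfl
      map_add' := fun _ _ => rfl
      map_one' := rfl
      map_mul' := fun _ _ => rfl }

/-- forgetting to types -/
def presheafCompForget :
    presheafCommRing X ⋙ forget CommRingCat ≅ (sheafInType X).1 :=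
  NatIso.ofComponents (fun _ => Iso.refl _) (fun _ => rfl)

/-- The tidy sheaf, valued in `CommRingCat`. -/
def tidySheaf : Sheaf CommRingCat X.toTopCat :=
  ⟨presheafCommRing X,
    (TopCat.Presheaf.isSheaf_iff_isSheaf_comp _ _).mpr
      (TopCat.Presheaf.isSheaf_of_iso (presheafCompForget X).symm (sheafInType X).cond)⟩

/-- The comparison map of presheaves. -/
def θ : X.presheaf ⟶ presheafCommRing X where
  app U := CommRingCat.ofHom
    (RingHom.codRestrict (θring X U.unop) (sectionsSubring X U)
      fun g => (isGermPre X).sheafifyOf ⟨g, rfl⟩)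
  naturality U V i := by
    ext g
    refine Subtype.ext (funext fun x => ?_)
    show mkQ X x.1 _ = mkQ X x.1 _
    exact congrArg (mkQ X x.1) (X.presheaf.germ_res_apply' i x.1 x.2 g)

@[simp] lemma θ_apply_val (U : Opens X) (g : X.presheaf.obj (op U)) :
    ((θ X).app (op U) g).1 = θring X U g := rfl

/-- The stalk comparison map. -/
def pθ (x : X) : X.presheaf.stalk x ⟶ (presheafCommRing X).stalk x :=
  (stalkFunctor CommRingCat x).map (θ X)

lemma pθ_germ (U : Opens X) (x : X) (hx : x ∈ U) (g : X.presheaf.obj (op U)) :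
    pθ X x (X.presheaf.germ U x hx g) =
      (presheafCommRing X).germ U x hx ((θ X).app (op U) g) := by
  exact stalkFunctor_map_germ_apply U x hx (θ X) g

lemma pθ_surjective (x : X) : Function.Surjective (pθ X x) := by
  intro t
  obtain ⟨U, hxU, s, rfl⟩ := (presheafCommRing X).germ_exist t
  obtain ⟨V, hxV, i, g, hg⟩ := s.2 ⟨x, hxU⟩
  refine ⟨X.presheaf.germ V x hxV g, ?_⟩
  rw [pθ_germ]
  refine TopCat.Presheaf.germ_ext (presheafCommRing X) V hxV (𝟙 V) i ?_
  refine Subtype.ext (funext fun y => ?_)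
  exact ((congrFun hg y).trans (by rfl)).symm

lemma pθ_ker {x : X} (a : X.presheaf.stalk x) (ha : pθ X x a = 0) : a ∈ J X x := by
  obtain ⟨U, hxU, g, rfl⟩ := X.presheaf.germ_exist a
  rw [pθ_germ] at ha
  have h0 : (presheafCommRing X).germ U x hxU ((θ X).app (op U) g) =
      (presheafCommRing X).germ U x hxU 0 := by rw [ha, map_zero]
  obtain ⟨W, hxW, iU, iV, heq⟩ := (presheafCommRing X).germ_eq x hxU hxU _ _ h0
  rw [map_zero] at heq
  have hnat : (presheafCommRing X).map iU.op ((θ X).app (op U) g) =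
      (θ X).app (op W) (X.presheaf.map iU.op g) := by
    rw [← comp_apply, ← (θ X).naturality, comp_apply]
  rw [hnat] at heq
  have hval : mkQ X x (X.presheaf.germ W x hxW (X.presheaf.map iU.op g)) = 0 :=
    congrFun (congrArg Subtype.val heq) ⟨x, hxW⟩
  rw [X.presheaf.germ_res_apply iU x hxW g] at hval
  exact (Ideal.Quotient.eq_zero_iff_mem).mp hval

lemma J_le_pow (x : X) (n : ℕ) : J X x ≤ (maximalIdeal (X.presheaf.stalk x)) ^ n :=
  iInf_le _ n

lemma J_le_max (x : X) : J X x ≤ maximalIdeal (X.presheaf.stalk x) :=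
  le_trans (J_le_pow X x 1) (by rw [pow_one])

instance stalk_nontrivial (x : X) : Nontrivial ((presheafCommRing X).stalk x) := by
  refine ⟨1, 0, fun h10 => ?_⟩
  have h1 : pθ X x 1 = 0 := by rw [map_one]; exact h10
  have := J_le_max X x (pθ_ker X _ h1)
  exact one_notMem_nonunits (mem_maximalIdeal _ |>.mp this)

instance stalk_isLocalRing (x : X) : IsLocalRing ((presheafCommRing X).stalk x) :=
  IsLocalRing.of_surjective' (pθ X x).hom (pθ_surjective X x)

instance pθ_isLocalHom (x : X) : IsLocalHom (pθ X x).hom := by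
  constructor
  intro a ha
  by_contra hna
  obtain ⟨u, hu⟩ := ha
  obtain ⟨b, hb⟩ := pθ_surjective X x ((u⁻¹ : _) : (presheafCommRing X).stalk x)
  have hab : pθ X x (a * b - 1) = 0 := by
    rw [map_sub, map_mul, hb, map_one, ← hu, Units.mul_inv, sub_self]
  have h1 : a * b - 1 ∈ maximalIdeal (X.presheaf.stalk x) := J_le_max X x (pθ_ker X _ hab)
  have h2 : a ∈ maximalIdeal (X.presheaf.stalk x) := mem_maximalIdeal _ |>.mpr hna
  have h3 : a * b ∈ maximalIdeal (X.presheaf.stalk x) := Ideal.mul_mem_right _ _ h2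
  have : (1 : X.presheaf.stalk x) ∈ maximalIdeal (X.presheaf.stalk x) := by
    simpa using Ideal.sub_mem _ h3 h1
  exact one_notMem_nonunits (mem_maximalIdeal _ |>.mp this)

lemma maximalIdeal_stalk_eq (x : X) :
    maximalIdeal ((presheafCommRing X).stalk x) =
      Ideal.map (pθ X x).hom (maximalIdeal (X.presheaf.stalk x)) := by
  apply le_antisymm
  · intro b hb
    obtain ⟨a, rfl⟩ := pθ_surjective X x b
    have ha : a ∈ maximalIdeal (X.presheaf.stalk x) := by
      rw [mem_maximalIdeal] at hb ⊢
      intro hu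
      exact hb (hu.map (pθ X x).hom)
    exact Ideal.mem_map_of_mem _ ha
  · rw [Ideal.map_le_iff_le_comap]
    intro a ha
    rw [Ideal.mem_comap, mem_maximalIdeal]
    intro hu
    exact (mem_maximalIdeal _ |>.mp ha) (IsUnit.of_map (pθ X x).hom a hu)

lemma mem_maximalIdeal_pow_stalk {x : X} {N : ℕ}
    (b : (presheafCommRing X).stalk x)
    (hb : b ∈ (maximalIdeal ((presheafCommRing X).stalk x)) ^ N) :
    ∃ a ∈ (maximalIdeal (X.presheaf.stalk x)) ^ N, pθ X x a = b := by
  rw [maximalIdeal_stalk_eq, ← Ideal.map_pow] at hb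
  obtain ⟨a, ha, rfl⟩ := Ideal.mem_map_iff_of_surjective _ (pθ_surjective X x) |>.mp hb
  exact ⟨a, ha, rfl⟩

/-- The tidying locally ringed space. -/
def Zspace : LocallyRingedSpace where
  carrier := X.toTopCat
  presheaf := presheafCommRing X
  IsSheaf := (tidySheaf X).2
  isLocalRing := fun x => stalk_isLocalRing X x

/-- The underlying presheafed-space morphism of the tidying map. -/
def tHom : (Zspace X).toPresheafedSpace.Hom X.toPresheafedSpace where
  base := 𝟙 X.toTopCat
  c := θ X

lemma tHom_stalkMap (x : X) : (tHom X).stalkMap x = pθ X x := by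
  apply TopCat.Presheaf.stalk_hom_ext
  intro U hxU
  erw [PresheafedSpace.stalkMap_germ]
  show _ = X.presheaf.germ U x hxU ≫ (stalkFunctor _ x).map (θ X)
  erw [stalkFunctor_map_germ]
  rfl

/-- The tidying morphism. -/
def t : Zspace X ⟶ X :=
  ⟨tHom X, fun x => by erw [tHom_stalkMap]; exact pθ_isLocalHom X x⟩

lemma mem_pow_of_local {R S : Type*} [CommRing R] [CommRing S] [IsLocalRing R] [IsLocalRing S]
    (ψ : R →+* S) [IsLocalHom ψ] {N : ℕ} {a : R} (ha : a ∈ maximalIdeal R ^ N) :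
    ψ a ∈ maximalIdeal S ^ N := by
  have hle : Ideal.map ψ (maximalIdeal R) ≤ maximalIdeal S := by
    rw [Ideal.map_le_iff_le_comap]
    intro r hr
    rw [Ideal.mem_comap, mem_maximalIdeal]
    intro hu
    exact (mem_maximalIdeal _ |>.mp hr) (IsUnit.of_map ψ r hu)
  have : ψ a ∈ Ideal.map ψ (maximalIdeal R ^ N) := Ideal.mem_map_of_mem _ ha
  rw [Ideal.map_pow] at this
  exact Ideal.pow_right_mono hle N this

lemma tidy_Zspace : TidySpace (Zspace X) := by
  intro V s x hx H
  have hs : s = 0 := by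
    refine Subtype.ext (funext fun x' => ?_)
    obtain ⟨W, hW, i, g, hg⟩ := s.2 x'
    have hres : (presheafCommRing X).map i.op s = (θ X).app (op W) g := by
      refine Subtype.ext ?_
      exact hg
    have hgerm : ∀ N : ℕ, X.presheaf.germ W x'.1 hW g ∈
        (maximalIdeal (X.presheaf.stalk x'.1)) ^ N := by
      intro N
      have h1 : pθ X x'.1 (X.presheaf.germ W x'.1 hW g) =
          (presheafCommRing X).germ V x'.1 x'.2 s := by
        rw [pθ_germ, ← hres]
        exact (presheafCommRing X).germ_res_apply i x'.1 hW s
      have h2 : (presheafCommRing X).germ V x'.1 x'.2 s ∈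
          (maximalIdeal ((presheafCommRing X).stalk x'.1)) ^ N := H x'.1 x'.2 N
      rw [← h1] at h2
      obtain ⟨a, haN, ha⟩ := mem_maximalIdeal_pow_stalk X _ h2
      have hk : X.presheaf.germ W x'.1 hW g - a ∈ J X x'.1 :=
        pθ_ker X _ (by rw [map_sub, ha, sub_self])
      have := J_le_pow X x'.1 N hk
      simpa using Ideal.add_mem _ this haN
    have hJg : X.presheaf.germ W x'.1 hW g ∈ J X x'.1 :=
      Submodule.mem_iInf _ |>.mpr hgerm
    have e1 := congrFun hg (⟨x'.1, hW⟩ : W)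
    calc s.1 x' = mkQ X x'.1 (X.presheaf.germ W x'.1 hW g) := e1
    _ = 0 := Ideal.Quotient.eq_zero_iff_mem.mpr hJg
  rw [hs, map_zero]

section Universal

variable {X}
variable {Y : LocallyRingedSpace.{u}} (φ : Y ⟶ X)

/-- Sections whose germs are everywhere in `J` are killed by `φ`. -/
lemma vanish (hY : TidySpace Y) (W : Opens X) (h : X.presheaf.obj (op W))
    (hJ : ∀ (x' : X) (hx' : x' ∈ W), X.presheaf.germ W x' hx' h ∈ J X x') :
    φ.toHom.c.app (op W) h = 0 := by
  set V : Opens Y := (Opens.map φ.toHom.base).obj W with hV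
  set u : Y.presheaf.obj (op V) := φ.toHom.c.app (op W) h with hu
  refine TopCat.Presheaf.section_ext Y.sheaf V u 0 fun y hy => ?_
  rw [map_zero]
  have key : ∀ (y' : Y) (hy' : y' ∈ V) (N : ℕ),
      Y.presheaf.germ V y' hy' u ∈ (maximalIdeal (Y.presheaf.stalk y')) ^ N := by
    intro y' hy' N
    have h1 : Y.presheaf.germ V y' hy' u =
        φ.toHom.stalkMap y' (X.presheaf.germ W (φ.toHom.base y') hy' h) :=
      (PresheafedSpace.stalkMap_germ_apply φ.toHom W y' hy' h).symm
    rw [h1]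
    exact mem_pow_of_local _ (J_le_pow X _ N (hJ _ hy'))
  exact hY V u y hy key

/-- The candidate stalk value of the factored morphism. -/
def IsVal (V : Opens X) (s : (presheafCommRing X).obj (op V)) (y : Y)
    (v : Y.presheaf.stalk y) : Prop :=
  ∃ (W : Opens X) (hW : φ.toHom.base y ∈ W) (i : W ⟶ V) (g : X.presheaf.obj (op W)),
    ((fun z : W => s.1 ⟨z.1, i.le z.2⟩) = θring X W g) ∧
    v = φ.toHom.stalkMap y (X.presheaf.germ W (φ.toHom.base y) hW g)

lemma germ_vanish (hY : TidySpace Y) {W : Opens X} (h : X.presheaf.obj (op W))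
    (hJ : ∀ (x' : X) (hx' : x' ∈ W), X.presheaf.germ W x' hx' h ∈ J X x')
    (y : Y) (hy : φ.toHom.base y ∈ W) :
    φ.toHom.stalkMap y (X.presheaf.germ W (φ.toHom.base y) hy h) = 0 := by
  rw [PresheafedSpace.stalkMap_germ_apply φ.toHom W y hy h]
  exact (congrArg (Y.presheaf.germ ((Opens.map φ.toHom.base).obj W) y hy)
    (vanish φ hY W h hJ)).trans (map_zero _)

lemma val_unique (hY : TidySpace Y) {V : Opens X} {s : (presheafCommRing X).obj (op V)}
    {y : Y} {v v' : Y.presheaf.stalk y}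
    (h : IsVal φ V s y v) (h' : IsVal φ V s y v') : v = v' := by
  obtain ⟨W, hW, i, g, hg, rfl⟩ := h
  obtain ⟨W', hW', i', g', hg', rfl⟩ := h'
  set W'' : Opens X := W ⊓ W'
  have hW'' : φ.toHom.base y ∈ W'' := ⟨hW, hW'⟩
  set d : X.presheaf.obj (op W'') := X.presheaf.map (Opens.infLELeft W W').op g -
    X.presheaf.map (Opens.infLERight W W').op g'
  have hJd : ∀ (x' : X) (hx' : x' ∈ W''), X.presheaf.germ W'' x' hx' d ∈ J X x' := by
    intro x' hx'
    have e1 := congrFun hg (⟨x', hx'.1⟩ : W)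
    have e2 := congrFun hg' (⟨x', hx'.2⟩ : W')
    have : mkQ X x' (X.presheaf.germ W'' x' hx' d) = 0 := by
      rw [map_sub, map_sub, X.presheaf.germ_res_apply (Opens.infLELeft W W') x' hx' g,
        X.presheaf.germ_res_apply (Opens.infLERight W W') x' hx' g']
      have : s.1 ⟨x', i.le hx'.1⟩ = s.1 ⟨x', i'.le hx'.2⟩ := rfl
      rw [show mkQ X x' (X.presheaf.germ W x' hx'.1 g) = s.1 ⟨x', i.le hx'.1⟩ from e1.symm,
        show mkQ X x' (X.presheaf.germ W' x' hx'.2 g') = s.1 ⟨x', i'.le hx'.2⟩ from e2.symm,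
        this, sub_self]
    exact Ideal.Quotient.eq_zero_iff_mem.mp this
  have h0 := germ_vanish φ hY d hJd y hW''
  rw [map_sub, map_sub, X.presheaf.germ_res_apply (Opens.infLELeft W W') _ hW'' g,
    X.presheaf.germ_res_apply (Opens.infLERight W W') _ hW'' g', sub_eq_zero] at h0
  exact h0

lemma val_exists {V : Opens X} (s : (presheafCommRing X).obj (op V)) (y : Y)
    (hy : φ.toHom.base y ∈ V) : ∃ v, IsVal φ V s y v := by
  obtain ⟨W, hW, i, g, hg⟩ := s.2 ⟨φ.toHom.base y, hy⟩
  exact ⟨_, W, hW, i, g, hg, rfl⟩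

/-- Characterisation of the section of `Y` corresponding to a tidy section. -/
def IsSec (V : Opens X) (s : (presheafCommRing X).obj (op V))
    (u : Y.presheaf.obj (op ((Opens.map φ.toHom.base).obj V))) : Prop :=
  ∀ (y : Y) (hy : y ∈ (Opens.map φ.toHom.base).obj V),
    IsVal φ V s y (Y.presheaf.germ _ y hy u)

lemma sec_unique (hY : TidySpace Y) {V : Opens X} {s : (presheafCommRing X).obj (op V)}
    {u u' : Y.presheaf.obj (op ((Opens.map φ.toHom.base).obj V))}
    (h : IsSec φ V s u) (h' : IsSec φ V s u') : u = u' :=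
  TopCat.Presheaf.section_ext Y.sheaf _ u u' fun y hy =>
    val_unique φ hY (h y hy) (h' y hy)

lemma sec_exists (hY : TidySpace Y) (V : Opens X) (s : (presheafCommRing X).obj (op V)) :
    ∃ u, IsSec φ V s u := by
  classical
  set f := φ.toHom.base
  set ι := ((Opens.map f).obj V : Type u)
  have wit : ∀ y : ι, ∃ (W : Opens X) (hW : f y.1 ∈ W) (i : W ⟶ V) (g : X.presheaf.obj (op W)),
      (fun z : W => s.1 ⟨z.1, i.le z.2⟩) = θring X W g := by
    intro y
    obtain ⟨W, hW, i, g, hg⟩ := s.2 ⟨f y.1, y.2⟩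
    exact ⟨W, hW, i, g, hg⟩
  choose W hW iWV g hg using wit
  set U : ι → Opens Y := fun y => (Opens.map f).obj (W y)
  have hcover : (Opens.map f).obj V ≤ iSup U := by
    intro z hz
    exact Opens.mem_iSup.mpr ⟨⟨z, hz⟩, hW ⟨z, hz⟩⟩
  set sf : ∀ y : ι, Y.presheaf.obj (op (U y)) := fun y => φ.toHom.c.app (op (W y)) (g y)
  have compat : TopCat.Presheaf.IsCompatible Y.sheaf.1 U sf := by
    intro a b
    refine TopCat.Presheaf.section_ext Y.sheaf _ _ _ fun w hw => ?_
    show Y.presheaf.germ (U a ⊓ U b) w hw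
        (Y.presheaf.map ((U a).infLELeft (U b)).op (sf a)) =
      Y.presheaf.germ (U a ⊓ U b) w hw
        (Y.presheaf.map ((U a).infLERight (U b)).op (sf b))
    rw [Y.presheaf.germ_res_apply (Opens.infLELeft (U a) (U b)) w hw (sf a),
      Y.presheaf.germ_res_apply (Opens.infLERight (U a) (U b)) w hw (sf b)]
    have va : IsVal φ V s w (Y.presheaf.germ (U a) w hw.1 (sf a)) := by
      refine ⟨W a, hw.1, iWV a, g a, hg a, ?_⟩
      exact (PresheafedSpace.stalkMap_germ_apply φ.toHom (W a) w hw.1 (g a)).symm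
    have vb : IsVal φ V s w (Y.presheaf.germ (U b) w hw.2 (sf b)) := by
      refine ⟨W b, hw.2, iWV b, g b, hg b, ?_⟩
      exact (PresheafedSpace.stalkMap_germ_apply φ.toHom (W b) w hw.2 (g b)).symm
    exact val_unique φ hY va vb
  obtain ⟨u, hu, -⟩ := TopCat.Sheaf.existsUnique_gluing' Y.sheaf U ((Opens.map f).obj V)
    (fun y => (Opens.map f).map (iWV y)) hcover sf compat
  refine ⟨u, fun y hy => ?_⟩
  have hu' : ∀ i : ι, Y.presheaf.map ((Opens.map f).map (iWV i)).op u = sf i := hu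
  have h1 : Y.presheaf.germ ((Opens.map f).obj V) y hy u =
      Y.presheaf.germ (U ⟨y, hy⟩) y (hW ⟨y, hy⟩) (sf ⟨y, hy⟩) := by
    rw [← hu' ⟨y, hy⟩, Y.presheaf.germ_res_apply ((Opens.map f).map (iWV ⟨y, hy⟩)) y (hW ⟨y, hy⟩) u]
  refine ⟨W ⟨y, hy⟩, hW ⟨y, hy⟩, iWV ⟨y, hy⟩, g ⟨y, hy⟩, hg ⟨y, hy⟩, ?_⟩
  rw [h1]
  exact (PresheafedSpace.stalkMap_germ_apply φ.toHom (W ⟨y, hy⟩) y (hW ⟨y, hy⟩) (g ⟨y, hy⟩)).symm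

variable (hY : TidySpace Y)

/-- The section of `Y` corresponding to a tidy section. -/
def secOf (V : Opens X) (s : (presheafCommRing X).obj (op V)) :
    Y.presheaf.obj (op ((Opens.map φ.toHom.base).obj V)) :=
  (sec_exists φ hY V s).choose

lemma secOf_spec (V : Opens X) (s : (presheafCommRing X).obj (op V)) :
    IsSec φ V s (secOf φ hY V s) :=
  (sec_exists φ hY V s).choose_spec

lemma isSec_zero (V : Opens X) : IsSec φ V 0 0 := by
  intro y hy
  refine ⟨V, hy, 𝟙 V, 0, ?_, ?_⟩
  · funext z
    show (0 : Q X z.1) = θring X V 0 z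
    rw [map_zero]
    rfl
  · rw [map_zero, map_zero, map_zero]

lemma isSec_one (V : Opens X) : IsSec φ V 1 1 := by
  intro y hy
  refine ⟨V, hy, 𝟙 V, 1, ?_, ?_⟩
  · funext z
    show (1 : Q X z.1) = θring X V 1 z
    rw [map_one]
    rfl
  · rw [map_one, map_one, map_one]

lemma isSec_add {V : Opens X} {s s' : (presheafCommRing X).obj (op V)}
    {u u' : Y.presheaf.obj (op ((Opens.map φ.toHom.base).obj V))}
    (h : IsSec φ V s u) (h' : IsSec φ V s' u') : IsSec φ V (s + s') (u + u') := by
  intro y hy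
  obtain ⟨W, hW, i, g, hg, hv⟩ := h y hy
  obtain ⟨W', hW', i', g', hg', hv'⟩ := h' y hy
  refine ⟨W ⊓ W', ⟨hW, hW'⟩, Opens.infLELeft _ _ ≫ i,
    X.presheaf.map (Opens.infLELeft W W').op g + X.presheaf.map (Opens.infLERight W W').op g',
    ?_, ?_⟩
  · funext z
    have e1 := congrFun hg (⟨z.1, z.2.1⟩ : W)
    have e2 := congrFun hg' (⟨z.1, z.2.2⟩ : W')
    show s.1 ⟨z.1, i.le z.2.1⟩ + s'.1 ⟨z.1, i'.le z.2.2⟩ = _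
    rw [e1, e2, map_add]
    show _ = θring X _ _ z + θring X _ _ z
    rw [θring_apply, θring_apply, θring_apply, θring_apply,
      X.presheaf.germ_res_apply (Opens.infLELeft W W') z.1 z.2 g,
      X.presheaf.germ_res_apply (Opens.infLERight W W') z.1 z.2 g']
  · rw [map_add, map_add, hv, hv', map_add,
      X.presheaf.germ_res_apply (Opens.infLELeft W W') _ ⟨hW, hW'⟩ g,
      X.presheaf.germ_res_apply (Opens.infLERight W W') _ ⟨hW, hW'⟩ g']

lemma isSec_mul {V : Opens X} {s s' : (presheafCommRing X).obj (op V)}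
    {u u' : Y.presheaf.obj (op ((Opens.map φ.toHom.base).obj V))}
    (h : IsSec φ V s u) (h' : IsSec φ V s' u') : IsSec φ V (s * s') (u * u') := by
  intro y hy
  obtain ⟨W, hW, i, g, hg, hv⟩ := h y hy
  obtain ⟨W', hW', i', g', hg', hv'⟩ := h' y hy
  refine ⟨W ⊓ W', ⟨hW, hW'⟩, Opens.infLELeft _ _ ≫ i,
    X.presheaf.map (Opens.infLELeft W W').op g * X.presheaf.map (Opens.infLERight W W').op g',
    ?_, ?_⟩
  · funext z
    have e1 := congrFun hg (⟨z.1, z.2.1⟩ : W)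
    have e2 := congrFun hg' (⟨z.1, z.2.2⟩ : W')
    show s.1 ⟨z.1, i.le z.2.1⟩ * s'.1 ⟨z.1, i'.le z.2.2⟩ = _
    rw [e1, e2, map_mul]
    show _ = θring X _ _ z * θring X _ _ z
    rw [θring_apply, θring_apply, θring_apply, θring_apply,
      X.presheaf.germ_res_apply (Opens.infLELeft W W') z.1 z.2 g,
      X.presheaf.germ_res_apply (Opens.infLERight W W') z.1 z.2 g']
  · rw [map_mul, map_mul, hv, hv', map_mul,
      X.presheaf.germ_res_apply (Opens.infLELeft W W') _ ⟨hW, hW'⟩ g,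
      X.presheaf.germ_res_apply (Opens.infLERight W W') _ ⟨hW, hW'⟩ g']

/-- The components of the factored morphism. -/
def c'hom (V : Opens X) :
    (presheafCommRing X).obj (op V) →+*
      Y.presheaf.obj (op ((Opens.map φ.toHom.base).obj V)) where
  toFun := secOf φ hY V
  map_zero' := sec_unique φ hY (secOf_spec φ hY V 0) (isSec_zero φ V)
  map_one' := sec_unique φ hY (secOf_spec φ hY V 1) (isSec_one φ V)
  map_add' s s' := sec_unique φ hY (secOf_spec φ hY V (s + s'))
    (isSec_add φ (secOf_spec φ hY V s) (secOf_spec φ hY V s'))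
  map_mul' s s' := sec_unique φ hY (secOf_spec φ hY V (s * s'))
    (isSec_mul φ (secOf_spec φ hY V s) (secOf_spec φ hY V s'))

lemma isSec_res {V V' : Opens X} (i : V' ⟶ V) (s : (presheafCommRing X).obj (op V))
    {u : Y.presheaf.obj (op ((Opens.map φ.toHom.base).obj V))} (h : IsSec φ V s u) :
    IsSec φ V' ((presheafCommRing X).map i.op s)
      (Y.presheaf.map ((Opens.map φ.toHom.base).map i).op u) := by
  intro y hy
  obtain ⟨W, hW, iw, g, hg, hv⟩ := h y (((Opens.map φ.toHom.base).map i).le hy)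
  refine ⟨W ⊓ V', ⟨hW, hy⟩, Opens.infLERight _ _,
    X.presheaf.map (Opens.infLELeft W V').op g, ?_, ?_⟩
  · funext z
    have e1 := congrFun hg (⟨z.1, z.2.1⟩ : W)
    show s.1 ⟨z.1, iw.le z.2.1⟩ = _
    rw [e1]
    show _ = θring X _ _ z
    rw [θring_apply, θring_apply,
      X.presheaf.germ_res_apply (Opens.infLELeft W V') z.1 z.2 g]
  · rw [Y.presheaf.germ_res_apply ((Opens.map φ.toHom.base).map i) y hy u, hv,
      X.presheaf.germ_res_apply (Opens.infLELeft W V') _ ⟨hW, hy⟩ g]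

lemma isSec_θ (W : Opens X) (g : X.presheaf.obj (op W)) :
    IsSec φ W ((θ X).app (op W) g) (φ.toHom.c.app (op W) g) := by
  intro y hy
  refine ⟨W, hy, 𝟙 W, g, ?_, ?_⟩
  · funext z
    rfl
  · exact (PresheafedSpace.stalkMap_germ_apply φ.toHom W y hy g).symm

lemma secOf_θ (W : Opens X) (g : X.presheaf.obj (op W)) :
    secOf φ hY W ((θ X).app (op W) g) = φ.toHom.c.app (op W) g :=
  sec_unique φ hY (secOf_spec φ hY W _) (isSec_θ φ W g)

/-- The underlying presheafed-space morphism of the factorisation. -/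
def φ'Hom : Y.toPresheafedSpace.Hom (Zspace X).toPresheafedSpace where
  base := φ.toHom.base
  c :=
    { app := fun V => CommRingCat.ofHom (R := (presheafCommRing X).obj V) (c'hom φ hY (unop V))
      naturality := fun V V' i => by
        ext s
        exact sec_unique φ hY
          (secOf_spec φ hY (unop V') ((presheafCommRing X).map i s))
          (isSec_res φ i.unop s (secOf_spec φ hY (unop V) s)) }

lemma φ'_isLocalHom (y : Y) : IsLocalHom ((φ'Hom φ hY).stalkMap y).hom := by
  constructor
  intro a ha
  obtain ⟨U, hxU, s, rfl⟩ := (presheafCommRing X).germ_exist (x := φ.toHom.base y) a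
  obtain ⟨W, hW, i, g, hg⟩ := s.2 ⟨φ.toHom.base y, hxU⟩
  have hres : (presheafCommRing X).map i.op s = (θ X).app (op W) g := Subtype.ext hg
  have h1 : pθ X _ (X.presheaf.germ W _ hW g) = (presheafCommRing X).germ U _ hxU s := by
    rw [pθ_germ, ← hres]
    exact (presheafCommRing X).germ_res_apply i _ hW s
  have h2 : (φ'Hom φ hY).stalkMap y ((presheafCommRing X).germ U _ hxU s) =
      Y.presheaf.germ ((Opens.map φ.toHom.base).obj U) y hxU (c'hom φ hY U s) :=
    PresheafedSpace.stalkMap_germ_apply (φ'Hom φ hY) U y hxU s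
  have h3 : Y.presheaf.germ ((Opens.map φ.toHom.base).obj U) y hxU (c'hom φ hY U s) =
      φ.toHom.stalkMap y (X.presheaf.germ W _ hW g) :=
    val_unique φ hY (secOf_spec φ hY U s y hxU) ⟨W, hW, i, g, hg, rfl⟩
  rw [h2, h3] at ha
  have hg_unit : IsUnit (X.presheaf.germ W _ hW g) := IsUnit.of_map _ _ ha
  have := hg_unit.map (pθ X (φ.toHom.base y)).hom
  rwa [h1] at this

/-- The factorisation of `φ` through the tidying. -/
def φ' : Y ⟶ Zspace X := ⟨φ'Hom φ hY, φ'_isLocalHom φ hY⟩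

lemma φ'_comp : φ' φ hY ≫ t X = φ := by
  apply LocallyRingedSpace.Hom.ext'
  refine PresheafedSpace.hext _ _ rfl (heq_of_eq ?_)
  have hc : (t X).toHom.c ≫
      (TopCat.Presheaf.pushforward CommRingCat (𝟙 X.toTopCat)).map (φ'Hom φ hY).c =
      φ.toHom.c := by
    ext V s
    show (φ'Hom φ hY).c.app ((Opens.map (𝟙 X.toTopCat)).op.obj (op V))
        ((θ X).app (op V) s) = φ.toHom.c.app (op V) s
    exact secOf_θ φ hY ((Opens.map (𝟙 X.toTopCat)).obj V) s
  exact hc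

lemma φ'_uniq (ψ : Y ⟶ Zspace X) (hψ : ψ ≫ t X = φ) : ψ = φ' φ hY := by
  obtain ⟨⟨b, c⟩, hloc⟩ := ψ
  have hb : b = φ.toHom.base := by
    have := congrArg (fun (m : Y ⟶ X) => m.toHom.base) hψ
    exact this
  subst hb
  have hsh : ((⟨⟨φ.toHom.base, c⟩, hloc⟩ : Y ⟶ Zspace X).toHom ≫ (t X).toHom)
      = φ.toHom.toPshHom := by exact congrArg LocallyRingedSpace.Hom.toHom hψ
  apply LocallyRingedSpace.Hom.ext'
  refine PresheafedSpace.hext _ _ rfl (heq_of_eq ?_)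
  show c = (φ'Hom φ hY).c
  ext V s
  show c.app (op V) s = c'hom φ hY V s
  refine sec_unique φ hY ?_ (secOf_spec φ hY V s)
  intro y hy
  obtain ⟨W, hW, i, g, hg⟩ := s.2 ⟨φ.toHom.base y, hy⟩
  have hres : (presheafCommRing X).map i.op s = (θ X).app (op W) g := Subtype.ext hg
  have hnat : c.app (op W) ((presheafCommRing X).map i.op s) =
      Y.presheaf.map ((Opens.map φ.toHom.base).map i).op (c.app (op V) s) :=
    ConcreteCategory.congr_hom (c.naturality i.op) s
  rw [hres] at hnat
  -- germ of the restriction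
  have h1 : Y.presheaf.germ ((Opens.map φ.toHom.base).obj W) y hW
        (Y.presheaf.map ((Opens.map φ.toHom.base).map i).op (c.app (op V) s)) =
      Y.presheaf.germ ((Opens.map φ.toHom.base).obj V) y hy
        (c.app (op V) s) := by
    rw [Y.presheaf.germ_res_apply ((Opens.map φ.toHom.base).map i) y hW
      (c.app (op V) s)]
  -- use the hypothesis on θ-sections
  have happ := PresheafedSpace.congr_app hsh (op W)
  have h8 := congrArg (fun (m : X.presheaf.obj (op W) ⟶
      ((TopCat.Presheaf.pushforward CommRingCat φ.toHom.base).obj Y.presheaf).obj (op W)) =>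
      m ≫ Y.presheaf.germ ((Opens.map φ.toHom.base).obj W) y hW) happ
  simp only [Category.assoc] at h8
  erw [Category.assoc (φ.toPshHom.c.app (op W)), Y.presheaf.germ_res'] at h8
  refine ⟨W, hW, i, g, hg, ?_⟩
  rw [← h1, ← hnat]
  rw [PresheafedSpace.stalkMap_germ_apply φ.toHom W y hW g]
  exact ConcreteCategory.congr_hom h8 g

end Universal

end Tidying

end Tidying

/-- Existence of the tidying: for every locally ringed space `X` there is a tidy locally
ringed space `X°` with the same underlying topological space, together with a morphism
`t : X° ⟶ X` whose underlying continuous map is the identity and whose stalk maps are all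
surjective, such that every morphism from a tidy locally ringed space to `X` factors
uniquely through `t`. -/
theorem exists_tidying (X : LocallyRingedSpace) :
    ∃ (Z : LocallyRingedSpace) (t : Z ⟶ X) (h : Z.toTopCat = X.toTopCat),
      t.base = eqToHom h ∧
      (∀ z : Z, Function.Surjective (t.stalkMap z)) ∧
      TidySpace Z ∧
      ∀ (Y : LocallyRingedSpace) (φ : Y ⟶ X), TidySpace Y →
        ∃! φ' : Y ⟶ Z, φ' ≫ t = φ := by
  refine ⟨Tidying.Zspace X, Tidying.t X, rfl, ?_, ?_, Tidying.tidy_Zspace X, ?_⟩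
  · erw [eqToHom_refl]
    rfl
  · intro z
    have h : (Tidying.t X).stalkMap z = Tidying.pθ X z := Tidying.tHom_stalkMap X z
    rw [h]
    exact Tidying.pθ_surjective X z
  · intro Y φ hY
    exact ⟨Tidying.φ' φ hY, Tidying.φ'_comp φ hY, fun ψ hψ => Tidying.φ'_uniq φ hY ψ hψ⟩
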